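/- Assume k : ℝⁿ → H is continuous. Let T > 0 and let γ : [0,T] → ℝⁿ be continuous. For each t ∈ [0,T] let Γ_{γ,t} ∈ H denote the occupation kernel of γ restricted to [0,t], i.e., the element of H satisfying ⟪g, Γ_{γ,t}⟫ = ∫₀ᵗ (ι g)(γ s) ds for all g ∈ H. Then the map t ↦ Γ_{γ,t} is continuous from [0,T] to H (in the Hilbert space norm). -/

import Mathlib

open scoped RealInnerProductSpace

/-- Continuity of the occupation kernel in the time horizon: if `Γ t` is the
occupation kernel of `γ` restricted to `[0,t]`, then `t ↦ Γ t` is continuous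
on `[0,T]` in the Hilbert space norm. -/
theorem occupation_kernel_time_continuity
    {n : ℕ} (hn : 1 ≤ n) {H : Type*} [NormedAddCommGroup H] [InnerProductSpace ℝ H]
    [CompleteSpace H]
    (ι : H →ₗ[ℝ] (EuclideanSpace ℝ (Fin n) → ℝ)) (hι : Function.Injective ι)
    (k : EuclideanSpace ℝ (Fin n) → H)
    (hrep : ∀ (g : H) (x : EuclideanSpace ℝ (Fin n)), ι g x = ⟪g, k x⟫)
    (hk : Continuous k)
    (T : ℝ) (hT : 0 < T)
    (γ : ℝ → EuclideanSpace ℝ (Fin n)) (hγ : ContinuousOn γ (Set.Icc 0 T))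
    (Γ : ℝ → H)
    (hΓ : ∀ t ∈ Set.Icc (0:ℝ) T, ∀ g : H, ⟪g, Γ t⟫ = ∫ s in (0:ℝ)..t, ι g (γ s)) :
    ContinuousOn Γ (Set.Icc 0 T) := by
  have hkγ : ContinuousOn (fun s => k (γ s)) (Set.Icc 0 T) := hk.comp_continuousOn hγ
  have hInt : ∀ t ∈ Set.Icc (0:ℝ) T,
      IntervalIntegrable (fun s => k (γ s)) MeasureTheory.volume 0 t := by
    intro t ht
    apply ContinuousOn.intervalIntegrable
    apply hkγ.mono
    rw [Set.uIcc_of_le ht.1]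
    exact Set.Icc_subset_Icc le_rfl ht.2
  have key : ∀ t ∈ Set.Icc (0:ℝ) T, Γ t = ∫ s in (0:ℝ)..t, k (γ s) := by
    intro t ht
    apply ext_inner_left ℝ
    intro g
    rw [hΓ t ht g]
    have := (innerSL ℝ g).intervalIntegral_comp_comm (hInt t ht)
    simp only [innerSL_apply_apply] at this ⊢
    rw [← this]
    congr 1
    · ext s
      exact hrep g (γ s)
  have hF : ContinuousOn (fun t => ∫ s in (0:ℝ)..t, k (γ s)) (Set.Icc 0 T) := by
    have : Set.Icc (0:ℝ) T = Set.uIcc 0 T := (Set.uIcc_of_le hT.le).symm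
    rw [this]
    apply intervalIntegral.continuousOn_primitive_interval
    rw [← this]
    exact hkγ.integrableOn_compact isCompact_Icc
  exact hF.congr key
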